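/- Let X be a countably compact, countably tight Hausdorff semitopological semilattice and L ⊆ X a chain order-isomorphic to (ω₁, min). Then the closure of L is topologically isomorphic to ω₁ with its order topology and the minimum operation, and L is cofinal in its closure. -/

import Mathlib

/-- A space is countably compact if every infinite subset has an accumulation point. -/
def CountablyCompactSp (S : Type*) [TopologicalSpace S] : Prop :=
  ∀ A : Set S, A.Infinite → ∃ x : S, x ∈ closure (A \ {x})

/-- A space is countably tight if every point of the closure of a set lies in the closure of
a countable subset. -/
def CountablyTight (X : Type*) [TopologicalSpace X] : Prop :=
  ∀ (A : Set X) (x : X), x ∈ closure A → ∃ B ⊆ A, B.Countable ∧ x ∈ closure B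


open Set Filter Topology

section PartA
variable {X : Type*} [SemilatticeInf X] [TopologicalSpace X] [T2Space X]

lemma aux_closed_le (hcont : ∀ s : X, Continuous fun x => s ⊓ x) (a : X) :
    IsClosed {x : X | x ≤ a} := by
  have h : {x : X | x ≤ a} = {x : X | a ⊓ x = x} := by
    ext x; simp [inf_eq_right]
  rw [h]; exact isClosed_eq (hcont a) continuous_id

lemma aux_closed_ge (hcont : ∀ s : X, Continuous fun x => s ⊓ x) (a : X) :
    IsClosed {x : X | a ≤ x} := by
  have h : {x : X | a ≤ x} = {x : X | a ⊓ x = a} := by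
    ext x; simp [inf_eq_left]
  rw [h]; exact isClosed_eq (hcont a) continuous_const

/-- Any accumulation point of (the range of) a strictly increasing sequence is its
least upper bound, and is not a member of the range. -/
lemma aux_isLUB_of_acc (hcont : ∀ s : X, Continuous fun x => s ⊓ x)
    (y : ℕ → X) (hy : StrictMono y) (q : X)
    (hq : q ∈ closure (Set.range y \ {q})) :
    IsLUB (Set.range y) q ∧ q ∉ Set.range y := by
  have tail_sub : ∀ k, closure (y '' Set.Ici k) ⊆ {x : X | y k ≤ x} := by
    intro k
    refine closure_minimal ?_ (aux_closed_ge hcont (y k))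
    rintro _ ⟨m, hm, rfl⟩
    exact hy.monotone hm
  have hqr : q ∉ Set.range y := by
    rintro ⟨k, rfl⟩
    have hsub : Set.range y \ {y k} ⊆ (y '' Set.Iio k) ∪ (y '' Set.Ici (k + 1)) := by
      rintro _ ⟨⟨m, rfl⟩, hne⟩
      simp only [Set.mem_singleton_iff] at hne
      rcases lt_or_ge m k with h | h
      · exact Or.inl ⟨m, h, rfl⟩
      · rcases eq_or_lt_of_le h with h' | h'
        · exact absurd (congrArg y h'.symm) hne
        · exact Or.inr ⟨m, h', rfl⟩
    have h2 := closure_mono hsub hq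
    rw [closure_union, ((Set.finite_Iio k).image y).isClosed.closure_eq] at h2
    rcases h2 with h2 | h2
    · obtain ⟨m, hm, hme⟩ := h2
      exact absurd (hy.injective hme) (ne_of_lt hm)
    · have := tail_sub (k + 1) h2
      exact absurd (lt_of_lt_of_le (hy (Nat.lt_succ_self k)) this) (lt_irrefl _)
  have hden : Set.range y \ {q} = Set.range y := by
    ext z; constructor
    · exact fun hz => hz.1
    · intro hz
      refine ⟨hz, ?_⟩
      simp only [Set.mem_singleton_iff]
      rintro rfl; exact hqr hz
  rw [hden] at hq
  constructor
  · constructor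
    · rintro _ ⟨k, rfl⟩
      have hq' : q ∈ closure (y '' Set.Ici k) := by
        have hsplit : Set.range y ⊆ (y '' Set.Iio k) ∪ (y '' Set.Ici k) := by
          rintro _ ⟨m, rfl⟩
          rcases lt_or_ge m k with h | h
          · exact Or.inl ⟨m, h, rfl⟩
          · exact Or.inr ⟨m, h, rfl⟩
        have h2 := closure_mono hsplit hq
        rw [closure_union, ((Set.finite_Iio k).image y).isClosed.closure_eq] at h2
        rcases h2 with h2 | h2
        · obtain ⟨m, _, hme⟩ := h2
          exact absurd ⟨m, hme⟩ hqr
        · exact h2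
      exact tail_sub k hq'
    · intro u hu
      have hcl : closure (Set.range y) ⊆ {x : X | x ≤ u} := by
        refine closure_minimal ?_ (aux_closed_le hcont u)
        rintro _ ⟨m, rfl⟩
        exact hu ⟨m, rfl⟩
      exact hcl hq
  · exact hqr

/-- In a countably compact semitopological semilattice, every strictly increasing
sequence has a least upper bound lying in the closure of its range. -/
lemma aux_exists_isLUB (hcont : ∀ s : X, Continuous fun x => s ⊓ x)
    (hcc : CountablyCompactSp X) (y : ℕ → X) (hy : StrictMono y) :
    ∃ p, IsLUB (Set.range y) p ∧ p ∈ closure (Set.range y) := by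
  obtain ⟨p, hp⟩ := hcc _ (Set.infinite_range_of_injective hy.injective)
  exact ⟨p, (aux_isLUB_of_acc hcont y hy p hp).1,
    closure_mono Set.diff_subset hp⟩

end PartA

section PartB
variable {X : Type*} [SemilatticeInf X] [TopologicalSpace X] [T2Space X] {L : Set X}

/-- Every element of `L` is comparable with every element of `closure L`. -/
lemma aux_cmp_closure (hcont : ∀ s : X, Continuous fun x => s ⊓ x)
    (hchain : ∀ a ∈ L, ∀ b ∈ L, a ≤ b ∨ b ≤ a) :
    ∀ a ∈ L, ∀ y ∈ closure L, a ≤ y ∨ y ≤ a := by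
  intro a ha y hy
  have h : closure L ⊆ {x : X | a ≤ x} ∪ {x : X | x ≤ a} := by
    refine closure_minimal (fun b hb => hchain a ha b hb) ?_
    exact (aux_closed_ge hcont a).union (aux_closed_le hcont a)
  exact h hy

/-- The closure of a chain is a chain. -/
lemma aux_chain_closure (hcont : ∀ s : X, Continuous fun x => s ⊓ x)
    (hchain : ∀ a ∈ L, ∀ b ∈ L, a ≤ b ∨ b ≤ a) :
    ∀ y ∈ closure L, ∀ z ∈ closure L, y ≤ z ∨ z ≤ y := by
  intro y hy z hz
  have h : closure L ⊆ {x : X | y ≤ x} ∪ {x : X | x ≤ y} := by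
    refine closure_minimal (fun b hb => (aux_cmp_closure hcont hchain b hb y hy).symm) ?_
    exact (aux_closed_ge hcont y).union (aux_closed_le hcont y)
  rcases h hz with h2 | h2
  · exact Or.inl h2
  · exact Or.inr h2

/-- Structure of points in the closure: they belong to `L` or are suprema of the
elements of `L` below them. -/
lemma aux_closure_point (hcont : ∀ s : X, Continuous fun x => s ⊓ x)
    (htight : CountablyTight X)
    (hchain : ∀ a ∈ L, ∀ b ∈ L, a ≤ b ∨ b ≤ a)
    (hwoL : ∀ S ⊆ L, S.Nonempty → ∃ m ∈ S, ∀ z ∈ S, m ≤ z)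
    {y : X} (hy : y ∈ closure L) :
    y ∈ L ∨ IsLUB {l : X | l ∈ L ∧ l < y} y := by
  by_cases hyL : y ∈ L
  · exact Or.inl hyL
  right
  obtain ⟨B, hBL, hBc, hyB⟩ := htight L y hy
  set B' := {b ∈ B | b < y} with hB'
  set B'' := {b ∈ B | y ≤ b} with hB''
  have hBsplit : B ⊆ B' ∪ B'' := by
    intro b hb
    rcases aux_cmp_closure hcont hchain b (hBL hb) y hy with h | h
    · rcases eq_or_lt_of_le h with h' | h'
      · exact absurd (h' ▸ hBL hb) hyL
      · exact Or.inl ⟨hb, h'⟩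
    · exact Or.inr ⟨hb, h⟩
  have hyB' : y ∈ closure B' := by
    have h2 := closure_mono hBsplit hyB
    rw [closure_union] at h2
    rcases h2 with h | h
    · exact h
    · exfalso
      have hne : B''.Nonempty := by
        by_contra hemp
        rw [Set.not_nonempty_iff_eq_empty] at hemp
        rw [hemp, closure_empty] at h
        exact h
      obtain ⟨b₀, hb₀, hb₀min⟩ := hwoL B'' (fun b hb => hBL hb.1) hne
      have h1 : closure B'' ⊆ {x : X | b₀ ≤ x} := by
        refine closure_minimal (fun b hb => hb₀min b hb) (aux_closed_ge hcont b₀)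
      exact hyL ((le_antisymm (h1 h) hb₀.2).symm ▸ hBL hb₀.1)
  constructor
  · rintro l ⟨_, hlt⟩
    exact le_of_lt hlt
  · intro u hu
    have h1 : closure B' ⊆ {x : X | x ≤ u} := by
      refine closure_minimal (fun b hb => hu ⟨hBL hb.1, hb.2⟩) (aux_closed_le hcont u)
    exact h1 hyB'

/-- Cofinality of `L` in its closure. -/
lemma aux_closure_cofinal (hcont : ∀ s : X, Continuous fun x => s ⊓ x)
    (htight : CountablyTight X)
    (hbdd : ∀ B ⊆ L, B.Countable → ∃ l ∈ L, ∀ b ∈ B, b ≤ l)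
    {y : X} (hy : y ∈ closure L) : ∃ l ∈ L, y ≤ l := by
  obtain ⟨B, hBL, hBc, hyB⟩ := htight L y hy
  obtain ⟨l, hl, hlb⟩ := hbdd B hBL hBc
  exact ⟨l, hl, closure_minimal (fun b hb => hlb b hb) (aux_closed_le hcont l) hyB⟩

/-- At most two points of the closure can have the same least `L`-bound above them:
one in `L` (namely that bound) and one outside `L`. -/
lemma aux_fiber (hcont : ∀ s : X, Continuous fun x => s ⊓ x)
    (htight : CountablyTight X)
    (hchain : ∀ a ∈ L, ∀ b ∈ L, a ≤ b ∨ b ≤ a)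
    (hwoL : ∀ S ⊆ L, S.Nonempty → ∃ m ∈ S, ∀ z ∈ S, m ≤ z)
    {l : X} (hl : l ∈ L) :
    (∀ z, z ∈ closure L → z ∈ L → z ≤ l → (∀ l' ∈ L, z ≤ l' → l ≤ l') → z = l) ∧
    (∀ z z', z ∈ closure L → z ∉ L → z ≤ l → (∀ l' ∈ L, z ≤ l' → l ≤ l') →
       z' ∈ closure L → z' ∉ L → z' ≤ l → (∀ l' ∈ L, z' ≤ l' → l ≤ l') → z = z') := by
  constructor
  · intro z _ hzL hzl hzmin
    exact le_antisymm hzl (hzmin z hzL le_rfl)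
  · have key : ∀ z z', z ∈ closure L → z ≤ l → (∀ l' ∈ L, z ≤ l' → l ≤ l') →
        z' ∈ closure L → z' ∉ L → z' ≤ l → z < z' → False := by
      intro z z' hz hzl hzmin hz' hz'L hz'l hlt
      rcases aux_closure_point hcont htight hchain hwoL hz' with h | h
      · exact hz'L h
      · have hub : z ∈ upperBounds {l'' : X | l'' ∈ L ∧ l'' < z'} := by
          rintro l'' ⟨hl''L, hl''lt⟩
          rcases aux_cmp_closure hcont hchain l'' hl''L z hz with h2 | h2
          · exact h2
          · exfalso
            have h3 := hzmin l'' hl''L h2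
            exact absurd (lt_of_le_of_lt h3 (lt_of_lt_of_le hl''lt hz'l)) (lt_irrefl l)
        exact absurd (lt_of_lt_of_le hlt (h.2 hub)) (lt_irrefl z)
    intro z z' hz hzL hzl hzmin hz' hz'L hz'l hz'min
    rcases aux_chain_closure hcont hchain z hz z' hz' with h | h
    · rcases eq_or_lt_of_le h with h' | h'
      · exact h'
      · exact absurd (key z z' hz hzl hzmin hz' hz'L hz'l h') id
    · rcases eq_or_lt_of_le h with h' | h'
      · exact h'.symm
      · exact absurd (key z' z hz' hz'l hz'min hz hzL hzl h') id

end PartB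
section PartC
variable {X : Type*} [SemilatticeInf X] [TopologicalSpace X] [T2Space X] {L : Set X}

/-- The closure of `L` is well-ordered. -/
lemma aux_wo_closure (hcont : ∀ s : X, Continuous fun x => s ⊓ x)
    (htight : CountablyTight X)
    (hchain : ∀ a ∈ L, ∀ b ∈ L, a ≤ b ∨ b ≤ a)
    (hwoL : ∀ S ⊆ L, S.Nonempty → ∃ m ∈ S, ∀ z ∈ S, m ≤ z)
    (hbdd : ∀ B ⊆ L, B.Countable → ∃ l ∈ L, ∀ b ∈ B, b ≤ l) :
    ∀ S ⊆ closure L, S.Nonempty → ∃ m ∈ S, ∀ z ∈ S, m ≤ z := by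
  intro S hS hSne
  by_contra hno
  push_neg at hno
  -- build a strictly decreasing sequence in S
  have hstep : ∀ z : S, ∃ w : S, (w : X) < z := by
    rintro ⟨z, hz⟩
    obtain ⟨w, hw, hnle⟩ := hno z hz
    have hcmp := aux_chain_closure hcont hchain z (hS hz) w (hS hw)
    have hlt : w < z := by
      rcases hcmp with h | h
      · exact (hnle h).elim
      · exact lt_of_le_of_ne h (fun he => hnle (he ▸ le_rfl))
    exact ⟨⟨w, hw⟩, hlt⟩
  choose G hG using hstep
  obtain ⟨s₀, hs₀⟩ := hSne
  set y : ℕ → S := fun n => G^[n] ⟨s₀, hs₀⟩ with hy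
  have hdec : ∀ n, (y (n + 1) : X) < y n := by
    intro n
    have : y (n + 1) = G (y n) := by
      rw [hy]; exact Function.iterate_succ_apply' G n _
    rw [this]; exact hG (y n)
  have hanti : StrictAnti fun n => (y n : X) := strictAnti_nat_of_succ_lt hdec
  -- least L-bound above each y n
  have hmin : ∀ n : ℕ, ∃ m ∈ L, (y n : X) ≤ m ∧ ∀ l' ∈ L, (y n : X) ≤ l' → m ≤ l' := by
    intro n
    obtain ⟨l, hl, hyl⟩ := aux_closure_cofinal hcont htight hbdd (hS (y n).2)
    obtain ⟨m, hm, hmmin⟩ := hwoL {l' : X | l' ∈ L ∧ (y n : X) ≤ l'}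
      (fun a ha => ha.1) ⟨l, hl, hyl⟩
    exact ⟨m, hm.1, hm.2, fun l' h1 h2 => hmmin l' ⟨h1, h2⟩⟩
  choose m hmL hmub hmmin using hmin
  have hmanti : ∀ i j, i ≤ j → m j ≤ m i := by
    have h1 : ∀ n, m (n + 1) ≤ m n := fun n =>
      hmmin (n + 1) (m n) (hmL n) ((hdec n).le.trans (hmub n))
    intro i j hij
    induction j with
    | zero => simp_all
    | succ k ih =>
      rcases Nat.lt_succ_iff_lt_or_eq.mp (Nat.lt_succ_of_le hij) with h | h
      · exact (h1 k).trans (ih (Nat.lt_succ_iff.mp h))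
      · exact h ▸ le_rfl
  -- the m n eventually stabilize
  obtain ⟨l₀, hl₀mem, hl₀min⟩ := hwoL {z : X | ∃ n, z = m n}
    (by rintro z ⟨n, rfl⟩; exact hmL n) ⟨m 0, 0, rfl⟩
  obtain ⟨N, hN⟩ := hl₀mem
  have hconst : ∀ n, N ≤ n → m n = l₀ := by
    intro n hn
    exact le_antisymm (hN ▸ hmanti N n hn) (hl₀min (m n) ⟨n, rfl⟩)
  have hl₀L : l₀ ∈ L := hN ▸ hmL N
  -- the three points y N, y (N+1), y (N+2) all lie in the fiber over l₀
  have hfib := aux_fiber hcont htight hchain hwoL hl₀L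
  have hP : ∀ n, N ≤ n → (y n : X) ∈ closure L ∧ (y n : X) ≤ l₀ ∧
      ∀ l' ∈ L, (y n : X) ≤ l' → l₀ ≤ l' := by
    intro n hn
    refine ⟨hS (y n).2, (hconst n hn) ▸ hmub n, fun l' h1 h2 => (hconst n hn) ▸ hmmin n l' h1 h2⟩
  have hpair : ∀ i j, N ≤ i → N ≤ j → (y i : X) ≠ (y j : X) →
      ¬(((y i : X) ∈ L) ↔ ((y j : X) ∈ L)) := by
    intro i j hi hj hne hiff
    obtain ⟨hc1, hle1, hmin1⟩ := hP i hi
    obtain ⟨hc2, hle2, hmin2⟩ := hP j hj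
    by_cases hL1 : (y i : X) ∈ L
    · have hL2 := hiff.mp hL1
      exact hne ((hfib.1 _ hc1 hL1 hle1 hmin1).trans (hfib.1 _ hc2 hL2 hle2 hmin2).symm)
    · have hL2 := fun h => hL1 (hiff.mpr h)
      exact hne (hfib.2 _ _ hc1 hL1 hle1 hmin1 hc2 hL2 hle2 hmin2)
  have d01 : (y N : X) ≠ (y (N+1) : X) := (hanti (Nat.lt_succ_self N)).ne'
  have d02 : (y N : X) ≠ (y (N+2) : X) := (hanti (by omega)).ne'
  have d12 : (y (N+1) : X) ≠ (y (N+2) : X) := (hanti (by omega)).ne'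
  have h01 := hpair N (N+1) le_rfl (by omega) d01
  have h02 := hpair N (N+2) le_rfl (by omega) d02
  have h12 := hpair (N+1) (N+2) (by omega) (by omega) d12
  tauto

/-- Initial segments of the closure determined by elements of `L` are countable. -/
lemma aux_countable_seg (hcont : ∀ s : X, Continuous fun x => s ⊓ x)
    (htight : CountablyTight X)
    (hchain : ∀ a ∈ L, ∀ b ∈ L, a ≤ b ∨ b ≤ a)
    (hwoL : ∀ S ⊆ L, S.Nonempty → ∃ m ∈ S, ∀ z ∈ S, m ≤ z)
    (hctble : ∀ l ∈ L, (L ∩ Set.Iic l).Countable) :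
    ∀ l ∈ L, (closure L ∩ Set.Iic l).Countable := by
  intro l hl
  set Fib : X → Set X := fun l' =>
    {y : X | y ∈ closure L ∧ y ≤ l' ∧ ∀ l'' ∈ L, y ≤ l'' → l' ≤ l''} with hFib
  have hcover : closure L ∩ Set.Iic l ⊆ ⋃ l' ∈ L ∩ Set.Iic l, Fib l' := by
    rintro y ⟨hy, hyl⟩
    obtain ⟨m, hm, hmmin⟩ := hwoL {l' : X | l' ∈ L ∧ y ≤ l'} (fun a ha => ha.1) ⟨l, hl, hyl⟩
    refine Set.mem_biUnion ⟨hm.1, hmmin l ⟨hl, hyl⟩⟩ ?_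
    exact ⟨hy, hm.2, fun l'' h1 h2 => hmmin l'' ⟨h1, h2⟩⟩
  refine Set.Countable.mono hcover ?_
  refine Set.Countable.biUnion (hctble l hl) ?_
  rintro l' ⟨hl'L, _⟩
  have hfib := aux_fiber hcont htight hchain hwoL hl'L
  have hsub : Fib l' ⊆ {l'} ∪ (Fib l' \ L) := by
    intro z hz
    by_cases hzL : z ∈ L
    · exact Or.inl (hfib.1 z hz.1 hzL hz.2.1 hz.2.2)
    · exact Or.inr ⟨hz, hzL⟩
  refine Set.Countable.mono hsub ?_
  refine (Set.countable_singleton l').union ?_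
  have : (Fib l' \ L).Subsingleton := by
    rintro z ⟨hz, hzL⟩ w ⟨hw, hwL⟩
    exact hfib.2 z w hz.1 hzL hz.2.1 hz.2.2 hw.1 hwL hw.2.1 hw.2.2
  exact this.countable

end PartC
section PartD
variable {X : Type*} [SemilatticeInf X] [TopologicalSpace X] [T2Space X]

/-- The key convergence property: if `D` has countable cofinality (witnessed by a strictly
increasing cofinal sequence) and `p` is its least upper bound, then every open set around `p`
contains a tail of `D`. -/
lemma aux_net_in_nbhd (hcont : ∀ s : X, Continuous fun x => s ⊓ x)
    (hcc : CountablyCompactSp X)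
    (D : Set X) (p : X) (x : ℕ → X) (hx : StrictMono x) (hxD : ∀ n, x n ∈ D)
    (hcof : ∀ d ∈ D, ∃ n, d ≤ x n) (hlub : IsLUB D p)
    (U : Set X) (hU : IsOpen U) (hpU : p ∈ U) :
    ∃ n, ∀ z ∈ D, x n ≤ z → z ∈ U := by
  by_contra hno
  push_neg at hno
  choose z hzD hzx hzU using hno
  choose c hc using fun k => hcof (z k) (hzD k)
  set idx : ℕ → ℕ := fun k => Nat.rec 0 (fun k' nk => max (c nk) k' + 1) k with hidx
  set w : ℕ → X := fun k => z (idx k) with hw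
  have hidxsucc : ∀ k, idx (k + 1) = max (c (idx k)) k + 1 := fun k => rfl
  have hwmono : StrictMono w := by
    refine strictMono_nat_of_lt_succ fun k => ?_
    calc w k ≤ x (c (idx k)) := hc (idx k)
    _ ≤ x (max (c (idx k)) k) := hx.monotone (le_max_left _ _)
    _ < x (max (c (idx k)) k + 1) := hx (Nat.lt_succ_self _)
    _ ≤ z (idx (k + 1)) := by rw [hidxsucc]; exact hzx _
  have hxw : ∀ k, x k ≤ w (k + 1) := by
    intro k
    calc x k ≤ x (max (c (idx k)) k + 1) := hx.monotone (by omega)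
    _ ≤ z (idx (k+1)) := by rw [hidxsucc]; exact hzx _
  have hubeq : upperBounds (Set.range w) = upperBounds D := by
    ext u; constructor
    · intro hu d hd
      obtain ⟨n, hn⟩ := hcof d hd
      exact hn.trans ((hxw n).trans (hu ⟨n + 1, rfl⟩))
    · rintro hu _ ⟨k, rfl⟩
      exact hu (hzD (idx k))
  obtain ⟨q, hqlub, hqcl⟩ := aux_exists_isLUB hcont hcc w hwmono
  have hqD : IsLUB D q := by
    constructor
    · rw [← hubeq]; exact hqlub.1
    · intro u hu
      exact hqlub.2 (by rw [hubeq]; exact hu)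
  have hqp : q = p := hqD.unique hlub
  have hqU : q ∉ U := by
    have h1 : closure (Set.range w) ⊆ Uᶜ := by
      refine closure_minimal ?_ (hU.isClosed_compl)
      rintro _ ⟨k, rfl⟩
      exact hzU (idx k)
    exact h1 hqcl
  exact hqU (hqp ▸ hpU)

end PartD

section PartE

/-- Every limit ordinal below `ω₁` admits a strictly increasing cofinal `ℕ`-sequence. -/
lemma aux_ord_cofinal (α : Ordinal) (hα : α < (Cardinal.aleph 1).ord) (hlim : Order.IsSuccLimit α) :
    ∃ c : ℕ → Ordinal, StrictMono c ∧ (∀ n, c n < α) ∧ ∀ β < α, ∃ n, β ≤ c n := by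
  have hcard : α.card ≤ Cardinal.aleph0 := by
    have h1 : α.card < Cardinal.aleph 1 := Cardinal.lt_ord.mp hα
    rw [← Cardinal.succ_aleph0] at h1
    exact Order.lt_succ_iff.mp h1
  have hct : Countable (Set.Iio α) := by
    rw [← Cardinal.mk_le_aleph0_iff, Ordinal.mk_Iio_ordinal]
    exact Cardinal.lift_le_aleph0.mpr hcard
  have hne : Nonempty (Set.Iio α) := ⟨⟨0, hlim.pos⟩⟩
  obtain ⟨g, hg⟩ := exists_surjective_nat (Set.Iio α)
  set c : ℕ → Ordinal := fun n => Nat.rec (g 0).1 (fun n' cn => max (cn + 1) (g (n' + 1)).1) n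
    with hcdef
  have hcsucc : ∀ n, c (n + 1) = max (c n + 1) (g (n + 1)).1 := fun _ => rfl
  have hlt1 : ∀ o : Ordinal, o < o + 1 := by
    intro o; rw [Ordinal.add_one_eq_succ]; exact Order.lt_succ _
  have hmono : StrictMono c := by
    refine strictMono_nat_of_lt_succ fun n => ?_
    rw [hcsucc]
    exact lt_of_lt_of_le (hlt1 _) (le_max_left _ _)
  have hbound : ∀ n, c n < α := by
    intro n
    induction n with
    | zero => exact (g 0).2
    | succ k ih =>
      rw [hcsucc]
      refine max_lt ?_ (g (k + 1)).2
      rw [Ordinal.add_one_eq_succ]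
      exact hlim.succ_lt ih
  refine ⟨c, hmono, hbound, fun β hβ => ?_⟩
  obtain ⟨n, hn⟩ := hg ⟨β, hβ⟩
  have hval : (g n).1 = β := by rw [hn]
  cases n with
  | zero => exact ⟨0, hval.ge⟩
  | succ k =>
    refine ⟨k + 1, ?_⟩
    rw [← hval, hcsucc]
    exact le_max_right _ _

end PartE

/-- In a countably compact, countably tight Hausdorff semitopological semilattice, the closure
of a chain `L` order-isomorphic to `(ω₁, min)` is topologically isomorphic to `ω₁` with its
order topology (and the `min` operation), and `L` is cofinal in its closure.  Here `ω₁` with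
its order topology is represented by the subspace `Set.Iio ω₁` of the ordinals with their
order topology. -/
theorem closure_omega1_chain_topologically_omega1 {X : Type*} [SemilatticeInf X]
    [TopologicalSpace X] [T2Space X]
    (hcont : ∀ s : X, Continuous fun x => s ⊓ x)
    (hcc : CountablyCompactSp X) (htight : CountablyTight X)
    (L : Set X)
    (hiso : Nonempty ((Set.Iio (Cardinal.aleph 1).ord) ≃o L)) :
    (∃ φ : (Set.Iio (Cardinal.aleph 1).ord) ≃o (closure L),
      Continuous φ ∧ Continuous φ.symm) ∧
    (∀ y ∈ closure L, ∃ l ∈ L, y ≤ l) := by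

  obtain ⟨f⟩ := hiso
  have hω₁lim : Order.IsSuccLimit ((Cardinal.aleph 1).ord) :=
    Cardinal.isSuccLimit_ord (Cardinal.aleph0_le_aleph 1)
  have hlt_a1 : ∀ c : Cardinal, c < Cardinal.aleph 1 → c ≤ Cardinal.aleph0 := fun c hc =>
    Order.lt_succ_iff.mp (by rwa [Cardinal.succ_aleph0])
  -- the chain property of L
  have hchain : ∀ a ∈ L, ∀ b ∈ L, a ≤ b ∨ b ≤ a := by
    intro a ha b hb
    rcases le_total (f.symm ⟨a, ha⟩) (f.symm ⟨b, hb⟩) with h | h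
    · left
      have := f.le_iff_le.mpr h
      rw [f.apply_symm_apply, f.apply_symm_apply] at this
      exact this
    · right
      have := f.le_iff_le.mpr h
      rw [f.apply_symm_apply, f.apply_symm_apply] at this
      exact this
  -- well-foundedness of subsets of L
  have hwoL : ∀ S ⊆ L, S.Nonempty → ∃ m ∈ S, ∀ z ∈ S, m ≤ z := by
    intro S hSL ⟨s₀, hs₀⟩
    have hwf : WellFounded ((· < ·) : (Set.Iio (Cardinal.aleph 1).ord) →
        (Set.Iio (Cardinal.aleph 1).ord) → Prop) := by
      exact InvImage.wf Subtype.val Ordinal.lt_wf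
    set S' : Set (Set.Iio (Cardinal.aleph 1).ord) := {w | (f w : X) ∈ S} with hS'
    have hS'ne : S'.Nonempty := by
      refine ⟨f.symm ⟨s₀, hSL hs₀⟩, ?_⟩
      show ((f (f.symm ⟨s₀, hSL hs₀⟩) : L) : X) ∈ S
      rw [f.apply_symm_apply]
      exact hs₀
    obtain ⟨w₀, hw₀S, hw₀min⟩ := hwf.has_min S' hS'ne
    refine ⟨(f w₀ : X), hw₀S, ?_⟩
    intro z hz
    set wz := f.symm ⟨z, hSL hz⟩ with hwz
    have hzval : (f wz : X) = z := by rw [hwz, f.apply_symm_apply]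
    have h1 : ¬ wz < w₀ := hw₀min wz (by rw [hS']; simp only [Set.mem_setOf_eq, hzval]; exact hz)
    have h2 : w₀ ≤ wz := not_lt.mp h1
    have := f.le_iff_le.mpr h2
    rw [← hzval]
    exact this
  -- countable subsets of L are bounded in L
  have hbdd : ∀ B ⊆ L, B.Countable → ∃ l ∈ L, ∀ b ∈ B, b ≤ l := by
    intro B hBL hBc
    rcases B.eq_empty_or_nonempty with rfl | hBne
    · exact ⟨(f ⟨0, hω₁lim.pos⟩ : X), (f _).2, fun b hb => absurd hb (Set.notMem_empty b)⟩
    set S : Set (Set.Iio (Cardinal.aleph 1).ord) := {w | (f w : X) ∈ B} with hS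
    have hinj : Function.Injective (fun w : (Set.Iio (Cardinal.aleph 1).ord) => (f w : X)) :=
      fun w w' h => f.injective (Subtype.val_injective h)
    have hSc : S.Countable := hBc.preimage hinj
    have hSne : S.Nonempty := by
      refine ⟨f.symm ⟨hBne.choose, hBL hBne.choose_spec⟩, ?_⟩
      show ((f (f.symm ⟨hBne.choose, hBL hBne.choose_spec⟩) : L) : X) ∈ B
      rw [f.apply_symm_apply]
      exact hBne.choose_spec
    have hSct : Countable ↥S := hSc.to_subtype
    have hSnty : Nonempty ↥S := hSne.to_subtype
    obtain ⟨g, hg⟩ := exists_surjective_nat ↥S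
    have hsup : (⨆ n : ℕ, (((g n : Set.Iio (Cardinal.aleph 1).ord)) : Ordinal))
        < (Cardinal.aleph 1).ord := by
      refine Ordinal.iSup_lt_ord_lift ?_ (fun n => ((g n : Set.Iio (Cardinal.aleph 1).ord)).2)
      rw [Cardinal.isRegular_aleph_one.cof_eq]
      refine lt_of_le_of_lt ?_ Cardinal.aleph0_lt_aleph_one
      simp [Cardinal.mk_nat]
    refine ⟨(f ⟨_, hsup⟩ : X), (f _).2, ?_⟩
    intro b hb
    set wb := f.symm ⟨b, hBL hb⟩ with hwb
    have hbval : (f wb : X) = b := by rw [hwb, f.apply_symm_apply]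
    have hwbS : wb ∈ S := by rw [hS]; simp only [Set.mem_setOf_eq, hbval]; exact hb
    obtain ⟨n, hn⟩ := hg ⟨wb, hwbS⟩
    have h1 : (wb : Ordinal) ≤ ⨆ n : ℕ, (((g n : Set.Iio (Cardinal.aleph 1).ord)) : Ordinal) := by
      have h2 := Ordinal.le_iSup
        (fun n : ℕ => (((g n : Set.Iio (Cardinal.aleph 1).ord)) : Ordinal)) n
      rw [hn] at h2
      exact h2
    have h2 : wb ≤ ⟨_, hsup⟩ := h1
    have := f.le_iff_le.mpr h2
    rw [← hbval]
    exact this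
  -- initial segments of L are countable
  have hctble : ∀ l ∈ L, (L ∩ Set.Iic l).Countable := by
    intro l hl
    set w₀ := f.symm ⟨l, hl⟩ with hw₀
    have hseg : (Set.Iio ((w₀ : Ordinal) + 1)).Countable := by
      rw [← Set.countable_coe_iff, ← Cardinal.mk_le_aleph0_iff, Ordinal.mk_Iio_ordinal]
      rw [Cardinal.lift_le_aleph0]
      have hlt : (w₀ : Ordinal) + 1 < (Cardinal.aleph 1).ord := by
        rw [Ordinal.add_one_eq_succ]
        exact hω₁lim.succ_lt w₀.2
      exact hlt_a1 _ (Cardinal.lt_ord.mp hlt)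
    have hsub : L ∩ Set.Iic l ⊆
        (fun w : (Set.Iio (Cardinal.aleph 1).ord) => (f w : X)) ''
          (Subtype.val ⁻¹' Set.Iio ((w₀ : Ordinal) + 1)) := by
      rintro b ⟨hbL, hble⟩
      set wb := f.symm ⟨b, hbL⟩ with hwb
      have hbval : (f wb : X) = b := by rw [hwb, f.apply_symm_apply]
      refine ⟨wb, ?_, hbval⟩
      have h1 : (⟨b, hbL⟩ : L) ≤ ⟨l, hl⟩ := hble
      have h2 : wb ≤ w₀ := by
        rw [hwb, hw₀]
        exact f.symm.le_iff_le.mpr h1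
      show (wb : Ordinal) ∈ Set.Iio ((w₀ : Ordinal) + 1)
      have : (wb : Ordinal) ≤ (w₀ : Ordinal) := h2
      rw [Set.mem_Iio, Ordinal.add_one_eq_succ]
      exact Order.lt_succ_iff.mpr this
    exact Set.Countable.mono hsub ((hseg.preimage Subtype.val_injective).image _)
  -- second component
  have hcof : ∀ y ∈ closure L, ∃ l ∈ L, y ≤ l := fun y hy =>
    aux_closure_cofinal hcont htight hbdd hy
  refine ⟨?_, hcof⟩
  -- the closure is a linearly ordered, well-founded chain
  letI linC : LinearOrder ↥(closure L) :=
    { (inferInstance : PartialOrder ↥(closure L)) with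
      le_total := fun a b => by
        rcases aux_chain_closure hcont hchain a a.2 b b.2 with h | h
        · exact Or.inl h
        · exact Or.inr h
      toDecidableLE := Classical.decRel _ }
  letI wfC : WellFoundedLT ↥(closure L) := by
    constructor
    rw [WellFounded.wellFounded_iff_has_min]
    intro s hs
    obtain ⟨m, ⟨mz, hmzs, rfl⟩, hmmin⟩ := aux_wo_closure hcont htight hchain hwoL hbdd
      (Subtype.val '' s) (by rintro _ ⟨z, hz, rfl⟩; exact z.2) (hs.image _)
    refine ⟨mz, hmzs, fun z hz hlt => ?_⟩
    have h2 : (mz : X) ≤ (z : X) := hmmin z.1 ⟨z, hz, rfl⟩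
    exact absurd (lt_of_le_of_lt h2 (Subtype.coe_lt_coe.mpr hlt)) (lt_irrefl _)
  set θ := Ordinal.type ((· < ·) : ↥(closure L) → ↥(closure L) → Prop) with hθ
  -- `L` is uncountable
  have hLunc : Cardinal.aleph 1 ≤ (Cardinal.mk ↥L) := by
    by_contra h
    push_neg at h
    have h1 : (Cardinal.mk ↥L) ≤ Cardinal.aleph0 :=
      Order.lt_succ_iff.mp (by rwa [Cardinal.succ_aleph0])
    have h2 : Countable ↥L := Cardinal.mk_le_aleph0_iff.mp h1
    have h3 : Countable ↥(Set.Iio (Cardinal.aleph 1).ord) := Countable.of_equiv _ f.symm.toEquiv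
    rw [← Cardinal.mk_le_aleph0_iff, Ordinal.mk_Iio_ordinal, Cardinal.card_ord,
      Cardinal.lift_le_aleph0] at h3
    exact Cardinal.aleph0_lt_aleph_one.not_ge h3
  have hθ₁ : (Cardinal.aleph 1).ord ≤ θ := by
    rw [hθ, Cardinal.ord_le, Ordinal.card_type]
    exact hLunc.trans (Cardinal.mk_le_mk_of_subset subset_closure)
  have hθ₂ : θ ≤ (Cardinal.aleph 1).ord := by
    by_contra hgt
    push_neg at hgt
    set z := Ordinal.enum ((· < ·) : ↥(closure L) → ↥(closure L) → Prop)
      ⟨(Cardinal.aleph 1).ord, hgt⟩ with hz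
    have h1 : Ordinal.typein ((· < ·) : ↥(closure L) → ↥(closure L) → Prop) z
        = (Cardinal.aleph 1).ord := Ordinal.typein_enum _ _
    obtain ⟨l, hlL, hzl⟩ := hcof z.1 z.2
    have h2 : Set.Countable {w : ↥(closure L) | w < z} := by
      have h3 : Subtype.val '' {w : ↥(closure L) | w < z} ⊆ closure L ∩ Set.Iic l := by
        rintro _ ⟨w, hw, rfl⟩
        exact ⟨w.2, le_trans (le_of_lt (Subtype.coe_lt_coe.mpr hw)) hzl⟩
      have h4 := (aux_countable_seg hcont htight hchain hwoL hctble l hlL).mono h3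
      have h5 : {w : ↥(closure L) | w < z} =
          Subtype.val ⁻¹' (Subtype.val '' {w : ↥(closure L) | w < z}) :=
        (Set.preimage_image_eq _ Subtype.val_injective).symm
      rw [h5]
      exact h4.preimage Subtype.val_injective
    have h6 : (Ordinal.typein ((· < ·) : ↥(closure L) → ↥(closure L) → Prop) z).card
        ≤ Cardinal.aleph0 := by
      rw [← Ordinal.type_subrel, Ordinal.card_type]
      exact Cardinal.mk_le_aleph0_iff.mpr h2.to_subtype
    rw [h1, Cardinal.card_ord] at h6
    exact Cardinal.aleph0_lt_aleph_one.not_ge h6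
  have hθeq : θ = (Cardinal.aleph 1).ord := le_antisymm hθ₂ hθ₁
  obtain ⟨e0⟩ : Nonempty ((((· < ·) : (Set.Iio (Cardinal.aleph 1).ord) →
      (Set.Iio (Cardinal.aleph 1).ord) → Prop)) ≃r
      ((· < ·) : ↥(closure L) → ↥(closure L) → Prop)) := by
    apply Ordinal.lift_type_eq.{_,_,0}.mp
    have hW : Ordinal.type ((· < ·) : (Set.Iio (Cardinal.aleph 1).ord) →
        (Set.Iio (Cardinal.aleph 1).ord) → Prop) =
        Ordinal.lift.{_+1} ((Cardinal.aleph 1).ord) := Ordinal.typein_ordinal _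
    rw [hW, ← hθ, hθeq]
    simp [Ordinal.lift_lift, Cardinal.lift_ord, Cardinal.lift_aleph]
  set ψ : (Set.Iio (Cardinal.aleph 1).ord) ≃o ↥(closure L) := OrderIso.ofRelIsoLT e0 with hψ
  have hψmono : ∀ a b : ↥(Set.Iio (Cardinal.aleph 1).ord), a ≤ b →
      ((ψ a : ↥(closure L)) : X) ≤ ((ψ b : ↥(closure L)) : X) :=
    fun a b h => Subtype.coe_le_coe.mpr (ψ.le_iff_le.mpr h)
  have hψlt : ∀ a b : ↥(Set.Iio (Cardinal.aleph 1).ord), a < b →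
      ((ψ a : ↥(closure L)) : X) < ((ψ b : ↥(closure L)) : X) :=
    fun a b h => Subtype.coe_lt_coe.mpr (ψ.lt_iff_lt.mpr h)
  set ψX : ↥(Set.Iio (Cardinal.aleph 1).ord) → X :=
    fun w => ((ψ w : ↥(closure L)) : X) with hψX
  have hfwdX : Continuous ψX := by
    rw [continuous_iff_continuousAt]
    rintro ⟨α, hα⟩
    have hiso_case : ∀ I : Set Ordinal, IsOpen I →
        (Subtype.val ⁻¹' I : Set ↥(Set.Iio (Cardinal.aleph 1).ord)) = {⟨α, hα⟩} →
        ContinuousAt ψX ⟨α, hα⟩ := by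
      intro I hIopen hIeq
      have hsingle : {(⟨α, hα⟩ : ↥(Set.Iio (Cardinal.aleph 1).ord))} ∈ 𝓝 (⟨α, hα⟩ :
          ↥(Set.Iio (Cardinal.aleph 1).ord)) := by
        rw [← hIeq]
        refine (hIopen.preimage continuous_subtype_val).mem_nhds ?_
        have : (⟨α, hα⟩ : ↥(Set.Iio (Cardinal.aleph 1).ord)) ∈
            (Subtype.val ⁻¹' I : Set ↥(Set.Iio (Cardinal.aleph 1).ord)) := by
          rw [hIeq]; exact rfl
        exact this
      have hpure : 𝓝 (⟨α, hα⟩ : ↥(Set.Iio (Cardinal.aleph 1).ord)) = pure ⟨α, hα⟩ :=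
        le_antisymm (Filter.le_pure_iff.mpr hsingle) (pure_le_nhds _)
      show Filter.Tendsto ψX (𝓝 ⟨α, hα⟩) (𝓝 (ψX ⟨α, hα⟩))
      rw [hpure]
      exact tendsto_pure_nhds ψX _
    rcases Ordinal.zero_or_succ_or_isSuccLimit α with hzero | ⟨β, hsucc⟩ | hlim
    · refine hiso_case (Set.Iio 1) isOpen_Iio ?_
      ext w
      simp only [Set.mem_preimage, Set.mem_Iio, Set.mem_singleton_iff, Ordinal.lt_one_iff_zero]
      constructor
      · intro h; exact Subtype.ext (h.trans hzero.symm)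
      · intro h; rw [h]; exact hzero
    · subst hsucc
      refine hiso_case (Set.Ioo β (Order.succ (Order.succ β))) isOpen_Ioo ?_
      ext w
      simp only [Set.mem_preimage, Set.mem_Ioo, Set.mem_singleton_iff]
      constructor
      · rintro ⟨h1, h2⟩
        exact Subtype.ext (le_antisymm (Order.lt_succ_iff.mp h2) (Order.succ_le_iff.mpr h1))
      · rintro rfl
        exact ⟨Order.lt_succ β, Order.lt_succ _⟩
    · -- limit case
      obtain ⟨cs, hcsmono, hcslt, hcscof⟩ := aux_ord_cofinal α hα hlim
      set aW : ↥(Set.Iio (Cardinal.aleph 1).ord) := ⟨α, hα⟩ with haW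
      set cW : ℕ → ↥(Set.Iio (Cardinal.aleph 1).ord) := fun n => ⟨cs n, (hcslt n).trans hα⟩
        with hcW
      set D : Set X := ψX '' {w | w < aW} with hD
      set xs : ℕ → X := fun n => ψX (cW n) with hxs
      have hxsmono : StrictMono xs := fun m n h =>
        hψlt _ _ ((Subtype.coe_lt_coe (p := (· ∈ Set.Iio (Cardinal.aleph 1).ord))).mp (hcsmono h))
      have hxsD : ∀ n, xs n ∈ D := fun n =>
        ⟨cW n, (Subtype.coe_lt_coe (x := cW n) (y := aW)).mp (hcslt n), rfl⟩
      have hcofD : ∀ d ∈ D, ∃ n, d ≤ xs n := by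
        rintro _ ⟨w, hw, rfl⟩
        obtain ⟨n, hn⟩ := hcscof w.1 hw
        exact ⟨n, hψmono _ _ (Subtype.coe_le_coe.mp hn)⟩
      obtain ⟨p', hp'lub, hp'cl⟩ := aux_exists_isLUB hcont hcc xs hxsmono
      have hrange : Set.range xs ⊆ closure L := by
        rintro _ ⟨n, rfl⟩
        exact (ψ (cW n)).2
      have hp'closL : p' ∈ closure L := closure_minimal hrange isClosed_closure hp'cl
      have hube : upperBounds (Set.range xs) = upperBounds D := by
        ext u
        constructor
        · intro hu d hd
          obtain ⟨n, hn⟩ := hcofD d hd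
          exact hn.trans (hu ⟨n, rfl⟩)
        · rintro hu _ ⟨n, rfl⟩
          exact hu (hxsD n)
      set δ := ψ.symm ⟨p', hp'closL⟩ with hδ
      have hψδ : ψX δ = p' := by
        show ((ψ (ψ.symm ⟨p', hp'closL⟩) : ↥(closure L)) : X) = p'
        rw [ψ.apply_symm_apply]
      have haδ : aW ≤ δ := by
        by_contra hlt'
        push_neg at hlt'
        have hsucclt : (δ : Ordinal) + 1 < α := by
          rw [Ordinal.add_one_eq_succ]
          exact hlim.succ_lt (Subtype.coe_lt_coe.mpr hlt')
        set δ' : ↥(Set.Iio (Cardinal.aleph 1).ord) := ⟨(δ : Ordinal) + 1, hsucclt.trans hα⟩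
        have h1 : ψX δ' ∈ D := ⟨δ', (Subtype.coe_lt_coe (x := δ') (y := aW)).mp hsucclt, rfl⟩
        have h2 : p' ∈ upperBounds D := by rw [← hube]; exact hp'lub.1
        have h3 : ψX δ' ≤ p' := h2 h1
        rw [← hψδ] at h3
        have h4 : δ' ≤ δ := ψ.le_iff_le.mp (Subtype.coe_le_coe.mp h3)
        have h5 : (δ : Ordinal) + 1 ≤ (δ : Ordinal) := h4
        rw [Ordinal.add_one_eq_succ] at h5
        exact absurd (Order.succ_le_iff.mp h5) (lt_irrefl _)
      have hplub : IsLUB D (ψX aW) := by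
        constructor
        · rintro _ ⟨w, hw, rfl⟩
          exact hψmono _ _ (le_of_lt hw)
        · intro u hu
          have h1 : ψX aW ≤ ψX δ := hψmono _ _ haδ
          have h2 : p' ≤ u := hp'lub.2 (by rw [hube]; exact hu)
          rw [hψδ] at h1
          exact h1.trans h2
      show Filter.Tendsto ψX (𝓝 aW) (𝓝 (ψX aW))
      rw [Filter.tendsto_def]
      intro U hU
      obtain ⟨U', hU'sub, hU'open, hpU'⟩ := mem_nhds_iff.mp hU
      obtain ⟨n, hn⟩ := aux_net_in_nbhd hcont hcc D (ψX aW) xs hxsmono hxsD hcofD hplub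
        U' hU'open hpU'
      have hVmem : (Subtype.val ⁻¹' (Set.Ioo (cs n) (α + 1)) :
          Set ↥(Set.Iio (Cardinal.aleph 1).ord)) ∈ 𝓝 aW := by
        refine (isOpen_Ioo.preimage continuous_subtype_val).mem_nhds ?_
        show (aW : Ordinal) ∈ Set.Ioo (cs n) (α + 1)
        refine ⟨hcslt n, ?_⟩
        rw [Ordinal.add_one_eq_succ]
        exact Order.lt_succ α
      refine Filter.mem_of_superset hVmem ?_
      rintro w ⟨hw1, hw2⟩
      rw [Ordinal.add_one_eq_succ, Order.lt_succ_iff] at hw2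
      rcases eq_or_lt_of_le hw2 with heq | hlt2
      · have : w = aW := Subtype.ext heq
        rw [Set.mem_preimage, this]
        exact hU'sub hpU'
      · have hwD : ψX w ∈ D := ⟨w, (Subtype.coe_lt_coe (x := w) (y := aW)).mp hlt2, rfl⟩
        have hxw : xs n ≤ ψX w := hψmono _ _ (Subtype.coe_le_coe.mp (le_of_lt hw1))
        exact hU'sub (hn (ψX w) hwD hxw)
  have hfwd : Continuous ψ := by
    have heq : (⇑ψ : ↥(Set.Iio (Cardinal.aleph 1).ord) → ↥(closure L)) =
        fun w => (⟨ψX w, (ψ w).2⟩ : ↥(closure L)) := rfl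
    rw [heq]
    exact hfwdX.subtype_mk _
  have hbwd : Continuous ψ.symm := by
    have hval : Continuous (fun y : ↥(closure L) =>
        ((ψ.symm y : ↥(Set.Iio (Cardinal.aleph 1).ord)) : Ordinal)) := by
      rw [continuous_def]
      intro s hs
      rw [OrderTopology.topology_eq_generate_intervals (α := Ordinal)] at hs
      induction hs with
      | basic s hs =>
        obtain ⟨b, hb | hb⟩ := hs
        · subst hb
          rcases lt_or_ge b ((Cardinal.aleph 1).ord) with hb1 | hb1
          · have heq : (fun y : ↥(closure L) =>
                ((ψ.symm y : ↥(Set.Iio (Cardinal.aleph 1).ord)) : Ordinal)) ⁻¹' (Set.Ioi b) =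
                Subtype.val ⁻¹' {z : X | z ≤ ((ψ ⟨b, hb1⟩ : ↥(closure L)) : X)}ᶜ := by
              ext y
              simp only [Set.mem_preimage, Set.mem_Ioi, Set.mem_compl_iff, Set.mem_setOf_eq]
              constructor
              · intro h
                have h1 : (⟨b, hb1⟩ : ↥(Set.Iio (Cardinal.aleph 1).ord)) < ψ.symm y :=
                  Subtype.coe_lt_coe.mp h
                have h2 : ψ ⟨b, hb1⟩ < y := by
                  have h3 := ψ.lt_iff_lt.mpr h1
                  rwa [ψ.apply_symm_apply] at h3
                exact fun hle => absurd h2 (not_lt.mpr (Subtype.coe_le_coe.mp hle))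
              · intro h
                have h2 : ψ ⟨b, hb1⟩ < y :=
                  not_le.mp (fun hle => h (Subtype.coe_le_coe.mpr hle))
                have h1 : (⟨b, hb1⟩ : ↥(Set.Iio (Cardinal.aleph 1).ord)) < ψ.symm y := by
                  have h3 := ψ.symm.lt_iff_lt.mpr h2
                  rwa [ψ.symm_apply_apply] at h3
                exact Subtype.coe_lt_coe.mpr h1
            rw [heq]
            exact ((aux_closed_le hcont _).isOpen_compl).preimage continuous_subtype_val
          · have heq : (fun y : ↥(closure L) =>
                ((ψ.symm y : ↥(Set.Iio (Cardinal.aleph 1).ord)) : Ordinal)) ⁻¹' (Set.Ioi b) =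
                (∅ : Set ↥(closure L)) := by
              refine Set.eq_empty_iff_forall_notMem.mpr fun y hy => ?_
              exact absurd ((ψ.symm y).2) (not_lt.mpr (hb1.trans (le_of_lt hy)))
            rw [heq]
            exact isOpen_empty
        · subst hb
          rcases lt_or_ge b ((Cardinal.aleph 1).ord) with hb1 | hb1
          · have heq : (fun y : ↥(closure L) =>
                ((ψ.symm y : ↥(Set.Iio (Cardinal.aleph 1).ord)) : Ordinal)) ⁻¹' (Set.Iio b) =
                Subtype.val ⁻¹' {z : X | ((ψ ⟨b, hb1⟩ : ↥(closure L)) : X) ≤ z}ᶜ := by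
              ext y
              simp only [Set.mem_preimage, Set.mem_Iio, Set.mem_compl_iff, Set.mem_setOf_eq]
              constructor
              · intro h
                have h1 : ψ.symm y < (⟨b, hb1⟩ : ↥(Set.Iio (Cardinal.aleph 1).ord)) :=
                  Subtype.coe_lt_coe.mp h
                have h2 : y < ψ ⟨b, hb1⟩ := by
                  have h3 := ψ.lt_iff_lt.mpr h1
                  rwa [ψ.apply_symm_apply] at h3
                exact fun hle => absurd h2 (not_lt.mpr (Subtype.coe_le_coe.mp hle))
              · intro h
                have h2 : y < ψ ⟨b, hb1⟩ :=
                  not_le.mp (fun hle => h (Subtype.coe_le_coe.mpr hle))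
                have h1 : ψ.symm y < (⟨b, hb1⟩ : ↥(Set.Iio (Cardinal.aleph 1).ord)) := by
                  have h3 := ψ.symm.lt_iff_lt.mpr h2
                  rwa [ψ.symm_apply_apply] at h3
                exact Subtype.coe_lt_coe.mpr h1
            rw [heq]
            exact ((aux_closed_ge hcont _).isOpen_compl).preimage continuous_subtype_val
          · have heq : (fun y : ↥(closure L) =>
                ((ψ.symm y : ↥(Set.Iio (Cardinal.aleph 1).ord)) : Ordinal)) ⁻¹' (Set.Iio b) =
                (Set.univ : Set ↥(closure L)) := by
              refine Set.eq_univ_iff_forall.mpr fun y => ?_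
              exact lt_of_lt_of_le ((ψ.symm y).2) hb1
            rw [heq]
            exact isOpen_univ
      | univ =>
        rw [Set.preimage_univ]
        exact isOpen_univ
      | inter s t hs ht ihs iht =>
        rw [Set.preimage_inter]
        exact ihs.inter iht
      | sUnion S hS ih =>
        rw [Set.preimage_sUnion]
        exact isOpen_biUnion ih
    have heq2 : (⇑ψ.symm : ↥(closure L) → ↥(Set.Iio (Cardinal.aleph 1).ord)) =
        fun y => ⟨((ψ.symm y : ↥(Set.Iio (Cardinal.aleph 1).ord)) : Ordinal), (ψ.symm y).2⟩ :=
      rfl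
    rw [heq2]
    exact hval.subtype_mk _
  exact ⟨ψ, hfwd, hbwd⟩
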